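/- Let X be an n-Hausdorff space and U an open ultrafilter on X with |aU| < n−1. Set k = n−1−|aU| and Y = X ∪ {p₁,…,p_k} with new points, topologized so that V ⊆ Y is open iff V ∩ X is open in X and (pᵢ ∈ V implies V ∩ X ∈ U). Then Y is n-Hausdorff, X is dense in Y, and the unique open ultrafilter V on Y containing U satisfies |a_Y(V)| = n−1. -/

import Mathlib

open Set Topology Function

universe u v

/-- A space is `n`-Hausdorff if any `n` distinct points admit open neighborhoods
with empty intersection. -/
def NHausdorff (X : Type u) [TopologicalSpace X] (n : ℕ) : Prop :=
  ∀ x : Fin n → X, Function.Injective x →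
    ∃ U : Fin n → Set X, (∀ i, IsOpen (U i) ∧ x i ∈ U i) ∧ (⋂ i, U i) = (∅ : Set X)

/-- An open filter on `X`: a nonempty family of nonempty open sets closed under
finite intersections and open supersets. -/
structure IsOpenFilter {X : Type u} [TopologicalSpace X] (F : Set (Set X)) : Prop where
  nonempty : F.Nonempty
  isOpen_mem : ∀ U ∈ F, IsOpen U
  nonempty_mem : ∀ U ∈ F, U.Nonempty
  inter_mem : ∀ U ∈ F, ∀ V ∈ F, U ∩ V ∈ F
  superset_mem : ∀ U ∈ F, ∀ V : Set X, IsOpen V → U ⊆ V → V ∈ F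

/-- An open ultrafilter: a maximal open filter. -/
def IsOpenUltrafilter {X : Type u} [TopologicalSpace X] (F : Set (Set X)) : Prop :=
  IsOpenFilter F ∧ ∀ G : Set (Set X), IsOpenFilter G → F ⊆ G → G = F

/-- The adherence of a family of sets: `⋂ {cl U : U ∈ F}`. -/
def adh {X : Type u} [TopologicalSpace X] (F : Set (Set X)) : Set X :=
  ⋂ U ∈ F, closure U

lemma univ_mem_of_isOpenFilter {X : Type u} [TopologicalSpace X] {F : Set (Set X)}
    (hF : IsOpenFilter F) : Set.univ ∈ F := by
  obtain ⟨U, hU⟩ := hF.nonempty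
  exact hF.superset_mem U hU Set.univ isOpen_univ (Set.subset_univ U)

/-- The extension `Y = X ∪ {p₁,…,p_k}` obtained by adding `k` new points all with
neighborhood trace the open filter `F`: `V` is open iff `V ∩ X` is open in `X` and
`pᵢ ∈ V` implies `V ∩ X ∈ F`. -/
def addPointsTop {X : Type u} [TopologicalSpace X] (F : Set (Set X))
    (hF : IsOpenFilter F) (k : ℕ) : TopologicalSpace (X ⊕ Fin k) where
  IsOpen V := IsOpen (Sum.inl ⁻¹' V) ∧ ∀ i : Fin k, Sum.inr i ∈ V → Sum.inl ⁻¹' V ∈ F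
  isOpen_univ := by
    refine ⟨by simpa using isOpen_univ, fun _ _ => ?_⟩
    simpa using univ_mem_of_isOpenFilter hF
  isOpen_inter := by
    rintro s t ⟨hs1, hs2⟩ ⟨ht1, ht2⟩
    refine ⟨by rw [Set.preimage_inter]; exact hs1.inter ht1, fun i hi => ?_⟩
    rw [Set.preimage_inter]
    exact hF.inter_mem _ (hs2 i hi.1) _ (ht2 i hi.2)
  isOpen_sUnion := by
    intro S hS
    have hop : IsOpen (Sum.inl ⁻¹' ⋃₀ S : Set X) := by
      rw [Set.preimage_sUnion]
      exact isOpen_biUnion fun s hs => (hS s hs).1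
    refine ⟨hop, ?_⟩
    rintro i ⟨s, hsS, his⟩
    exact hF.superset_mem _ ((hS s hsS).2 i his) _ hop
      (fun x hx => ⟨s, hsS, hx⟩)

section Aux

variable {X : Type u} [TopologicalSpace X] {F : Set (Set X)}

lemma ultra_mem_of_meets (hF : IsOpenUltrafilter F) {A : Set X} (hA : IsOpen A)
    (h : ∀ V ∈ F, (A ∩ V).Nonempty) : A ∈ F := by
  set G : Set (Set X) := {O | IsOpen O ∧ ∃ V ∈ F, A ∩ V ⊆ O} with hGdef
  have hGF : IsOpenFilter G := by
    refine ⟨⟨A, hA, Set.univ, univ_mem_of_isOpenFilter hF.1, Set.inter_subset_left⟩,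
      fun O hO => hO.1, ?_, ?_, ?_⟩
    · rintro O ⟨hO, V, hV, hsub⟩
      exact (h V hV).mono hsub
    · rintro O₁ ⟨hO₁, V₁, hV₁, hs₁⟩ O₂ ⟨hO₂, V₂, hV₂, hs₂⟩
      exact ⟨hO₁.inter hO₂, V₁ ∩ V₂, hF.1.inter_mem _ hV₁ _ hV₂,
        fun x hx => ⟨hs₁ ⟨hx.1, hx.2.1⟩, hs₂ ⟨hx.1, hx.2.2⟩⟩⟩
    · rintro O ⟨hO, V, hV, hs⟩ O' hO' hOO'
      exact ⟨hO', V, hV, hs.trans hOO'⟩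
  have hFG : F ⊆ G := fun V hV => ⟨hF.1.isOpen_mem V hV, V, hV, Set.inter_subset_right⟩
  have hGeq : G = F := hF.2 G hGF hFG
  have hAG : A ∈ G := ⟨hA, Set.univ, univ_mem_of_isOpenFilter hF.1, Set.inter_subset_left⟩
  rwa [hGeq] at hAG

variable (hFo : IsOpenFilter F) {k : ℕ}

lemma isOpen_addPointsTop {V : Set (X ⊕ Fin k)} :
    IsOpen[addPointsTop F hFo k] V ↔
      IsOpen (Sum.inl ⁻¹' V) ∧ ∀ i : Fin k, Sum.inr i ∈ V → Sum.inl ⁻¹' V ∈ F :=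
  Iff.rfl

lemma preimage_inl_image_inl (U : Set X) :
    (Sum.inl ⁻¹' (Sum.inl '' U : Set (X ⊕ Fin k))) = U :=
  Set.preimage_image_eq U Sum.inl_injective

lemma preimage_inl_liftF (W : Set X) :
    (Sum.inl ⁻¹' (Sum.inl '' W ∪ Set.range (Sum.inr : Fin k → X ⊕ Fin k))) = W := by
  ext x
  simp

lemma isOpen_liftOpen {U : Set X} (hU : IsOpen U) :
    IsOpen[addPointsTop F hFo k] (Sum.inl '' U) := by
  rw [isOpen_addPointsTop]
  refine ⟨by rw [preimage_inl_image_inl]; exact hU, fun i hi => absurd hi (by simp)⟩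

lemma isOpen_liftF {W : Set X} (hW : W ∈ F) :
    IsOpen[addPointsTop F hFo k] (Sum.inl '' W ∪ Set.range (Sum.inr : Fin k → X ⊕ Fin k)) := by
  rw [isOpen_addPointsTop]
  refine ⟨?_, fun i _ => ?_⟩ <;> rw [preimage_inl_liftF]
  · exact hFo.isOpen_mem W hW
  · exact hW

lemma liftF_mem {W : Set X} (hW : W ∈ F) :
    (Sum.inl '' W ∪ Set.range (Sum.inr : Fin k → X ⊕ Fin k)) ∈
      {W : Set (X ⊕ Fin k) | IsOpen[addPointsTop F hFo k] W ∧ Sum.inl ⁻¹' W ∈ F} :=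
  ⟨isOpen_liftF hFo hW, by rw [preimage_inl_liftF]; exact hW⟩

lemma partEmbedding :
    @IsEmbedding X (X ⊕ Fin k) _ (addPointsTop F hFo k) Sum.inl := by
  letI tY := addPointsTop F hFo k
  refine ⟨⟨?_⟩, Sum.inl_injective⟩
  refine TopologicalSpace.ext_iff.mpr fun s => ?_
  rw [isOpen_induced_iff]
  constructor
  · intro hs
    exact ⟨Sum.inl '' s, isOpen_liftOpen hFo hs, preimage_inl_image_inl s⟩
  · rintro ⟨t, ht, rfl⟩
    exact ((isOpen_addPointsTop hFo).mp ht).1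

lemma partDense :
    @Dense (X ⊕ Fin k) (addPointsTop F hFo k) (Set.range Sum.inl) := by
  letI tY := addPointsTop F hFo k
  rw [dense_iff_inter_open]
  rintro U hU ⟨y, hy⟩
  rw [isOpen_addPointsTop] at hU
  cases y with
  | inl x => exact ⟨Sum.inl x, hy, x, rfl⟩
  | inr i =>
    obtain ⟨z, hz⟩ := hFo.nonempty_mem _ (hU.2 i hy)
    exact ⟨Sum.inl z, hz, z, rfl⟩

lemma partUltra (hF : IsOpenUltrafilter F) (k : ℕ) :
    @IsOpenUltrafilter (X ⊕ Fin k) (addPointsTop F hF.1 k)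
      {W | IsOpen[addPointsTop F hF.1 k] W ∧ Sum.inl ⁻¹' W ∈ F} := by
  letI tY := addPointsTop F hF.1 k
  set G : Set (Set (X ⊕ Fin k)) := {W | IsOpen[tY] W ∧ Sum.inl ⁻¹' W ∈ F} with hGdef
  have hGF : IsOpenFilter G := by
    refine ⟨⟨Set.univ, isOpen_univ, by simpa using univ_mem_of_isOpenFilter hF.1⟩,
      fun W hW => hW.1, ?_, ?_, ?_⟩
    · rintro W ⟨hWo, hWF⟩
      obtain ⟨z, hz⟩ := hF.1.nonempty_mem _ hWF
      exact ⟨Sum.inl z, hz⟩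
    · rintro W ⟨hWo, hWF⟩ V ⟨hVo, hVF⟩
      exact ⟨hWo.inter hVo, by rw [Set.preimage_inter]; exact hF.1.inter_mem _ hWF _ hVF⟩
    · rintro W ⟨hWo, hWF⟩ V hVo hWV
      exact ⟨hVo, hF.1.superset_mem _ hWF _ ((isOpen_addPointsTop hF.1).mp hVo).1
        (Set.preimage_mono hWV)⟩
  refine ⟨hGF, fun H hH hGH => ?_⟩
  ext W
  refine ⟨fun hW => ?_, fun hW => hGH hW⟩
  have hWo : IsOpen[tY] W := hH.isOpen_mem W hW
  refine ⟨hWo, ?_⟩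
  by_contra hWX
  have hmeets : ¬ ∀ V ∈ F, ((Sum.inl ⁻¹' W) ∩ V).Nonempty := fun h =>
    hWX (ultra_mem_of_meets hF ((isOpen_addPointsTop hF.1).mp hWo).1 h)
  push_neg at hmeets
  obtain ⟨V, hVF, hdisj⟩ := hmeets
  have hVt : (Sum.inl '' V ∪ Set.range (Sum.inr : Fin k → X ⊕ Fin k)) ∈ H :=
    hGH (liftF_mem hF.1 hVF)
  obtain ⟨y, hyW, hyV⟩ := hH.nonempty_mem _ (hH.inter_mem _ hW _ hVt)
  cases y with
  | inl x =>
    rcases hyV with ⟨x', hx', heq⟩ | ⟨i, hi⟩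
    · have hmem : x ∈ Sum.inl ⁻¹' W ∩ V := ⟨hyW, Sum.inl_injective heq ▸ hx'⟩
      rw [hdisj] at hmem
      exact hmem
    · exact absurd hi (by simp)
  | inr i =>
    exact hWX (((isOpen_addPointsTop hF.1).mp hWo).2 i hyW)

lemma adh_push :
    @adh (X ⊕ Fin k) (addPointsTop F hFo k)
        {W | IsOpen[addPointsTop F hFo k] W ∧ Sum.inl ⁻¹' W ∈ F}
      = Sum.inl '' adh F ∪ Set.range (Sum.inr : Fin k → X ⊕ Fin k) := by
  letI tY := addPointsTop F hFo k
  ext y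
  simp only [adh, Set.mem_iInter]
  constructor
  · intro hy
    cases y with
    | inr i => exact Or.inr ⟨i, rfl⟩
    | inl x =>
      refine Or.inl ⟨x, ?_, rfl⟩
      simp only [adh, Set.mem_iInter]
      intro W hW
      rw [mem_closure_iff]
      intro U hU hxU
      have hclos := hy _ (liftF_mem hFo hW)
      rw [mem_closure_iff] at hclos
      obtain ⟨z, hz1, hz2⟩ := hclos (Sum.inl '' U) (isOpen_liftOpen hFo hU) ⟨x, hxU, rfl⟩
      obtain ⟨u, huU, rfl⟩ := hz1
      rcases hz2 with ⟨w, hwW, heq⟩ | ⟨i, hi⟩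
      · exact ⟨u, huU, Sum.inl_injective heq ▸ hwW⟩
      · exact absurd hi (by simp)
  · intro hy W hW
    rw [mem_closure_iff]
    intro V hVo hyV
    rcases hy with ⟨x, hxadh, rfl⟩ | ⟨i, rfl⟩
    · simp only [adh, Set.mem_iInter] at hxadh
      have hxcl := hxadh _ hW.2
      rw [mem_closure_iff] at hxcl
      have hVx : x ∈ Sum.inl ⁻¹' V := hyV
      obtain ⟨z, hz1, hz2⟩ := hxcl _ ((isOpen_addPointsTop hFo).mp hVo).1 hVx
      exact ⟨Sum.inl z, hz1, hz2⟩
    · have hVF : Sum.inl ⁻¹' V ∈ F := ((isOpen_addPointsTop hFo).mp hVo).2 i hyV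
      obtain ⟨z, hzV, hzW⟩ := hFo.nonempty_mem _ (hFo.inter_mem _ hVF _ hW.2)
      exact ⟨Sum.inl z, hzV, hzW⟩

lemma partNH {n m : ℕ} (hn : 1 ≤ n) (hX : NHausdorff X n)
    (hm : (adh F).encard = m) (hmk : m + k < n) :
    @NHausdorff (X ⊕ Fin k) (addPointsTop F hFo k) n := by
  letI tY := addPointsTop F hFo k
  intro y hy
  by_cases hall : ∀ i, ∃ x, y i = Sum.inl x
  · choose x hx using hall
    have hxinj : Function.Injective x := fun i j h => hy (by rw [hx, hx, h])
    obtain ⟨U, hU, hUint⟩ := hX x hxinj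
    refine ⟨fun i => Sum.inl '' U i,
      fun i => ⟨isOpen_liftOpen hFo (hU i).1, by rw [hx]; exact ⟨x i, (hU i).2, rfl⟩⟩, ?_⟩
    ext z
    simp only [Set.mem_iInter, Set.mem_empty_iff_false, iff_false]
    intro hz
    obtain ⟨w, hw0, rfl⟩ := hz ⟨0, by omega⟩
    have hwmem : w ∈ ⋂ i, U i := by
      refine Set.mem_iInter.2 fun i => ?_
      obtain ⟨w', hw', heq⟩ := hz i
      obtain rfl : w' = w := Sum.inl_injective heq
      exact hw'
    rw [hUint] at hwmem
    exact hwmem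
  · push_neg at hall
    obtain ⟨i₀, hi₀⟩ := hall
    have hex : ∃ i x, y i = Sum.inl x ∧ x ∉ adh F := by
      by_contra hc
      push_neg at hc
      have hsub : Set.range y ⊆ Sum.inl '' adh F ∪ Set.range Sum.inr := by
        rintro _ ⟨i, rfl⟩
        rcases hyi : y i with x | j
        · exact Or.inl ⟨x, hc i x hyi, rfl⟩
        · exact Or.inr ⟨j, rfl⟩
      have h1 : (Set.range y).encard = n := by
        rw [← Set.image_univ, hy.encard_image, Set.encard_univ]
        simp
      have h2 : (Sum.inl '' adh F ∪ Set.range (Sum.inr : Fin k → X ⊕ Fin k)).encard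
          ≤ (m : ℕ∞) + k := by
        refine le_trans (Set.encard_union_le _ _) ?_
        rw [Sum.inl_injective.encard_image, hm, ← Set.image_univ,
          Sum.inr_injective.encard_image, Set.encard_univ]
        simp
      have h3 : (n : ℕ∞) ≤ (m : ℕ∞) + k := by
        calc (n : ℕ∞) = (Set.range y).encard := h1.symm
        _ ≤ _ := Set.encard_mono hsub
        _ ≤ _ := h2
      rw [← Nat.cast_add] at h3
      exact absurd (Nat.cast_le.mp h3) (by omega)
    obtain ⟨i₁, x, hx1, hx2⟩ := hex
    simp only [adh, Set.mem_iInter] at hx2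
    push_neg at hx2
    obtain ⟨W, hWF, hxW⟩ := hx2
    set U := (closure W)ᶜ with hUdef
    have hUo : IsOpen U := isClosed_closure.isOpen_compl
    have hxU : x ∈ U := hxW
    have hUW : U ∩ W = ∅ := by
      ext z
      simp only [Set.mem_inter_iff, Set.mem_empty_iff_false, iff_false, not_and, hUdef,
        Set.mem_compl_iff]
      exact fun hz hzW => hz (subset_closure hzW)
    have hi₀₁ : i₀ ≠ i₁ := fun h => hi₀ x (h ▸ hx1)
    refine ⟨fun i => if i = i₁ then Sum.inl '' U
      else if i = i₀ then Sum.inl '' W ∪ Set.range Sum.inr else Set.univ, ?_, ?_⟩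
    · intro i
      dsimp only
      split_ifs with h1 h2
      · exact ⟨isOpen_liftOpen hFo hUo, by rw [h1, hx1]; exact ⟨x, hxU, rfl⟩⟩
      · refine ⟨isOpen_liftF hFo hWF, ?_⟩
        subst h2
        rcases hyi : y i with x' | j
        · exact absurd hyi (hi₀ x')
        · exact Or.inr ⟨j, rfl⟩
      · exact ⟨isOpen_univ, Set.mem_univ _⟩
    · ext z
      simp only [Set.mem_iInter, Set.mem_empty_iff_false, iff_false]
      intro hz
      have hz1 := hz i₁
      rw [if_pos rfl] at hz1
      have hz0 := hz i₀
      rw [if_neg hi₀₁, if_pos rfl] at hz0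
      obtain ⟨u, hu, rfl⟩ := hz1
      rcases hz0 with ⟨w, hwW, heq⟩ | ⟨j, hj⟩
      · have hmem : u ∈ U ∩ W := ⟨hu, Sum.inl_injective heq ▸ hwW⟩
        rw [hUW] at hmem
        exact hmem
      · exact absurd hj (by simp)

end Aux

theorem stmt14 {X : Type u} [TopologicalSpace X] (n : ℕ) (hn : 2 ≤ n)
    (hX : NHausdorff X n) (F : Set (Set X)) (hF : IsOpenUltrafilter F)
    (m : ℕ) (hm : (adh F).encard = m) (hmn : m < n - 1) :
    let tY : TopologicalSpace (X ⊕ Fin (n - 1 - m)) := addPointsTop F hF.1 (n - 1 - m)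
    @NHausdorff (X ⊕ Fin (n - 1 - m)) tY n ∧
    @IsEmbedding X (X ⊕ Fin (n - 1 - m)) _ tY Sum.inl ∧
    @Dense (X ⊕ Fin (n - 1 - m)) tY (Set.range Sum.inl) ∧
    @IsOpenUltrafilter (X ⊕ Fin (n - 1 - m)) tY
      {W | IsOpen[tY] W ∧ Sum.inl ⁻¹' W ∈ F} ∧
    (@adh (X ⊕ Fin (n - 1 - m)) tY {W | IsOpen[tY] W ∧ Sum.inl ⁻¹' W ∈ F}).encard
      = (n - 1 : ℕ) := by
  intro tY
  refine ⟨?_, ?_, ?_, ?_, ?_⟩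
  · exact partNH hF.1 (by omega) hX hm (by omega)
  · exact partEmbedding hF.1
  · exact partDense hF.1
  · exact partUltra hF (n - 1 - m)
  · show (@adh (X ⊕ Fin (n - 1 - m)) (addPointsTop F hF.1 (n - 1 - m))
        {W | IsOpen[addPointsTop F hF.1 (n - 1 - m)] W ∧ Sum.inl ⁻¹' W ∈ F}).encard
        = (n - 1 : ℕ)
    rw [adh_push hF.1, Set.encard_union_eq ?disj, Sum.inl_injective.encard_image, hm,
      ← Set.image_univ, Sum.inr_injective.encard_image, Set.encard_univ]
    case disj =>
      rw [Set.disjoint_left]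
      rintro _ ⟨x, _, rfl⟩ ⟨i, hi⟩
      exact Sum.inr_ne_inl hi
    simp only [ENat.card_eq_coe_fintype_card, Fintype.card_fin]
    rw [← Nat.cast_add]
    congr 1
    omega
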